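/- Let p be a prime, n ≥ 1, K a field, and α ∈ Kˣ with α ≠ 1 and α^p = 1. Let Γ = (ZMod p)ⁿ as an additive group. Then for every commutation factor ε on Γ over K there exists a unique ZMod p-bilinear form φ : Γ × Γ → ZMod p such that ε(i,j) = α^(φ(i,j)) for all i, j ∈ Γ (the exponent being the canonical integer representative of φ(i,j), which is well defined since α^p = 1). Moreover φ is symmetric if p = 2, and φ is alternating (φ(i,i) = 0 for all i) if p ≥ 3; in the latter case ε is proper. -/

import Mathlib

/-- A commutation factor on an abelian group `Γ` over a field `K`. -/
def IsCommFactor {Γ K : Type*} [AddCommGroup Γ] [Field K] (ε : Γ → Γ → Kˣ) : Prop :=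
  (∀ i j, ε i j * ε j i = 1) ∧
  (∀ i j k, ε i (j + k) = ε i j * ε i k) ∧
  (∀ i j k, ε (i + j) k = ε i k * ε j k)

private lemma aux_exists_pow_val_eq {K : Type*} [Field K] (p : ℕ) [Fact p.Prime] (α : Kˣ)
    (hα1 : α ≠ 1) (hαp : α ^ p = 1) (x : Kˣ) (hx : x ^ p = 1) :
    ∃ m : ZMod p, α ^ m.val = x := by
  have ho : orderOf α = p := orderOf_eq_prime hαp hα1
  have hle : Subgroup.zpowers α ≤ rootsOfUnity p K := by
    rw [Subgroup.zpowers_le, mem_rootsOfUnity]; exact hαp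
  have heq : Subgroup.zpowers α = rootsOfUnity p K := by
    apply Subgroup.eq_of_le_of_card_ge hle
    rw [Nat.card_zpowers, ho]
    exact card_rootsOfUnity K p
  have hxmem : x ∈ Subgroup.zpowers α := heq ▸ (mem_rootsOfUnity p x).mpr hx
  obtain ⟨k, hk⟩ := hxmem
  simp only at hk
  refine ⟨(k : ZMod p), ?_⟩
  have h2 : α ^ (((k : ZMod p).val : ℤ)) = α ^ k := by
    rw [zpow_eq_zpow_iff_modEq, ho, ← ZMod.intCast_eq_intCast_iff]
    push_cast [ZMod.natCast_val, ZMod.cast_id]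
    rfl
  rw [← hk, ← h2, zpow_natCast]

private lemma aux_pow_val_inj {K : Type*} [Field K] (p : ℕ) [Fact p.Prime] (α : Kˣ)
    (hα1 : α ≠ 1) (hαp : α ^ p = 1) {a b : ZMod p} (h : α ^ a.val = α ^ b.val) : a = b := by
  have ho : orderOf α = p := orderOf_eq_prime hαp hα1
  rw [pow_eq_pow_iff_modEq, ho] at h
  have hp : 0 < p := (Fact.out : p.Prime).pos
  have : a.val = b.val := by
    have := h
    unfold Nat.ModEq at this
    rwa [Nat.mod_eq_of_lt (ZMod.val_lt a), Nat.mod_eq_of_lt (ZMod.val_lt b)] at this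
  exact ZMod.val_injective p this

private lemma aux_pow_val_add {K : Type*} [Field K] (p : ℕ) [Fact p.Prime] (α : Kˣ)
    (hα1 : α ≠ 1) (hαp : α ^ p = 1) (a b : ZMod p) :
    α ^ (a + b).val = α ^ a.val * α ^ b.val := by
  have ho : orderOf α = p := orderOf_eq_prime hαp hα1
  rw [← pow_add, pow_eq_pow_iff_modEq, ho, ZMod.val_add]
  exact Nat.mod_modEq _ p

theorem statement2 {K : Type*} [Field K] (p n : ℕ) [Fact p.Prime] (hn : 1 ≤ n)
    (α : Kˣ) (hα1 : α ≠ 1) (hαp : α ^ p = 1)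
    (ε : (Fin n → ZMod p) → (Fin n → ZMod p) → Kˣ)
    (hε : IsCommFactor ε) :
    (∃! φ : (Fin n → ZMod p) →ₗ[ZMod p] (Fin n → ZMod p) →ₗ[ZMod p] ZMod p,
        ∀ i j, ε i j = α ^ (φ i j).val) ∧
    (∀ φ : (Fin n → ZMod p) →ₗ[ZMod p] (Fin n → ZMod p) →ₗ[ZMod p] ZMod p,
        (∀ i j, ε i j = α ^ (φ i j).val) →
        ((p = 2 → ∀ i j, φ i j = φ j i) ∧ (3 ≤ p → ∀ i, φ i i = 0))) ∧
    (3 ≤ p → ∀ i, ε i i = 1) := by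
  obtain ⟨h1, h2, h3⟩ := hε
  have inj := fun {a b : ZMod p} h => aux_pow_val_inj p α hα1 hαp (a := a) (b := b) h
  have hadd := aux_pow_val_add p α hα1 hαp
  -- ε 0 j = 1
  have hε0 : ∀ j, ε 0 j = 1 := by
    intro j
    have := h3 0 0 j
    rw [add_zero] at this
    exact (mul_right_cancel (a := (1 : Kˣ)) (by rw [one_mul, ← this])).symm
  -- ε i j ^ p = 1
  have hpow : ∀ i j, ε i j ^ p = 1 := by
    intro i j
    have key : ∀ m : ℕ, ε (m • i) j = ε i j ^ m := by
      intro m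
      induction m with
      | zero => simpa using hε0 j
      | succ k ih => rw [succ_nsmul, h3, ih, pow_succ]
    have hz : (p • i : Fin n → ZMod p) = 0 := by
      funext t
      simp [ZMod.natCast_self]
    rw [← key, hz, hε0]
  -- discrete log
  choose f hf using fun i j => aux_exists_pow_val_eq p α hα1 hαp (ε i j) (hpow i j)
  -- inner linear maps
  have hf2 : ∀ i j k, f i (j + k) = f i j + f i k := by
    intro i j k
    apply inj
    rw [hadd, hf, hf, hf, h2]
  have hf1 : ∀ i j k, f (i + j) k = f i k + f j k := by
    intro i j k
    apply inj
    rw [hadd, hf, hf, hf, h3]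
  let L : (Fin n → ZMod p) → (Fin n → ZMod p) →ₗ[ZMod p] ZMod p := fun i =>
    (AddMonoidHom.mk' (f i) (hf2 i)).toZModLinearMap p
  let φ₀ : (Fin n → ZMod p) →ₗ[ZMod p] (Fin n → ZMod p) →ₗ[ZMod p] ZMod p :=
    (AddMonoidHom.mk' L (by
      intro a b
      apply LinearMap.ext
      intro k
      exact hf1 a b k)).toZModLinearMap p
  have hφ₀ : ∀ i j, ε i j = α ^ (φ₀ i j).val := fun i j => (hf i j).symm
  -- part 2 helper: skew symmetry for any φ satisfying the property
  have skew : ∀ φ : (Fin n → ZMod p) →ₗ[ZMod p] (Fin n → ZMod p) →ₗ[ZMod p] ZMod p,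
      (∀ i j, ε i j = α ^ (φ i j).val) → ∀ i j, φ i j + φ j i = 0 := by
    intro φ hφ i j
    apply inj
    rw [hadd, ← hφ, ← hφ, h1, ZMod.val_zero, pow_zero]
  have part2 : ∀ φ : (Fin n → ZMod p) →ₗ[ZMod p] (Fin n → ZMod p) →ₗ[ZMod p] ZMod p,
      (∀ i j, ε i j = α ^ (φ i j).val) →
      ((p = 2 → ∀ i j, φ i j = φ j i) ∧ (3 ≤ p → ∀ i, φ i i = 0)) := by
    intro φ hφ
    constructor
    · intro hp2 i j
      have := skew φ hφ i j
      have hneg : φ i j = -φ j i := by linear_combination this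
      rw [hneg]
      subst hp2
      exact CharTwo.neg_eq _
    · intro hp3 i
      have := skew φ hφ i i
      have h2ne : (2 : ZMod p) ≠ 0 := by
        intro h0
        have : ((2 : ℕ) : ZMod p) = 0 := by exact_mod_cast h0
        have hdvd : p ∣ 2 := (ZMod.natCast_eq_zero_iff 2 p).mp this
        have := Nat.le_of_dvd (by norm_num) hdvd
        omega
      have : (2 : ZMod p) * φ i i = 0 := by linear_combination this
      rcases mul_eq_zero.mp this with h | h
      · exact absurd h h2ne
      · exact h
  refine ⟨⟨φ₀, hφ₀, ?_⟩, part2, ?_⟩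
  · intro φ' hφ'
    apply LinearMap.ext; intro i
    apply LinearMap.ext; intro j
    apply inj
    rw [← hφ' i j, ← hφ₀ i j]
  · intro hp3 i
    rw [hφ₀ i i, (part2 φ₀ hφ₀).2 hp3 i, ZMod.val_zero, pow_zero]
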